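/- Cut-vertex decomposition formula: if G = G¹ ∪ G² with G¹ ∩ G² = {v}, and L₁ = |G¹|, L₂ = |G²|, L = L₁ + L₂ are the total edge lengths, then μ_c(G) = (L₁/L)² μ_c(G¹) + (L₂/L)² μ_c(G²) + 2(L₁L₂/L²)(μ_c(v,G¹) + μ_c(v,G²)). -/

import Mathlib

open MeasureTheory

lemma inl_embedding {X1 X2 : Type*} [MeasurableSpace X1] [MeasurableSpace X2] :
    MeasurableEmbedding (Sum.inl : X1 → X1 ⊕ X2) :=
  ⟨Sum.inl_injective, measurable_inl, fun _ hs => hs.inl_image⟩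

lemma inr_embedding {X1 X2 : Type*} [MeasurableSpace X1] [MeasurableSpace X2] :
    MeasurableEmbedding (Sum.inr : X2 → X1 ⊕ X2) :=
  ⟨Sum.inr_injective, measurable_inr, fun _ hs => hs.inr_image⟩

/-- Cut-vertex decomposition formula: if `G = G¹ ∪ G²` with `G¹ ∩ G² = {v}` a cut vertex,
and `L₁ = |G¹|`, `L₂ = |G²|`, `L = L₁ + L₂` are the total edge lengths, then
`μ_c(G) = (L₁/L)² μ_c(G¹) + (L₂/L)² μ_c(G²) + 2(L₁L₂/L²)(μ_c(v,G¹) + μ_c(v,G²))`.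
The points of `G` are modelled as `X₁ ⊕ X₂` with the sum of the length measures; `d₁`, `d₂`
are the distances within `G¹`, `G²`, and for cross pairs `D(p,q) = d(p,v) + d(v,q) = f p + g q`. -/
theorem cut_vertex_decomposition {X1 X2 : Type*} [MeasurableSpace X1] [MeasurableSpace X2]
    (ν1 : Measure X1) (ν2 : Measure X2) (L1 L2 : ℝ) (hL1 : 0 < L1) (hL2 : 0 < L2)
    (hν1 : ν1 Set.univ = ENNReal.ofReal L1) (hν2 : ν2 Set.univ = ENNReal.ofReal L2)
    (d1 : X1 → X1 → ℝ) (d2 : X2 → X2 → ℝ) (f : X1 → ℝ) (g : X2 → ℝ)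
    (D : X1 ⊕ X2 → X1 ⊕ X2 → ℝ)
    (hD11 : ∀ p q, D (Sum.inl p) (Sum.inl q) = d1 p q)
    (hD22 : ∀ p q, D (Sum.inr p) (Sum.inr q) = d2 p q)
    (hD12 : ∀ p q, D (Sum.inl p) (Sum.inr q) = f p + g q)
    (hD21 : ∀ q p, D (Sum.inr q) (Sum.inl p) = f p + g q)
    (hf : Integrable f ν1) (hg : Integrable g ν2)
    (hd1 : ∀ p, Integrable (d1 p) ν1)
    (hd1' : Integrable (fun p => ∫ q, d1 p q ∂ν1) ν1)
    (hd2 : ∀ p, Integrable (d2 p) ν2)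
    (hd2' : Integrable (fun p => ∫ q, d2 p q ∂ν2) ν2) :
    (1 / (L1 + L2) ^ 2) *
        ∫ p, (∫ q, D p q ∂(ν1.map Sum.inl + ν2.map Sum.inr)) ∂(ν1.map Sum.inl + ν2.map Sum.inr)
      = (L1 / (L1 + L2)) ^ 2 * ((1 / L1 ^ 2) * ∫ p, (∫ q, d1 p q ∂ν1) ∂ν1)
        + (L2 / (L1 + L2)) ^ 2 * ((1 / L2 ^ 2) * ∫ p, (∫ q, d2 p q ∂ν2) ∂ν2)
        + 2 * (L1 * L2 / (L1 + L2) ^ 2) *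
            ((1 / L1) * (∫ p, f p ∂ν1) + (1 / L2) * (∫ q, g q ∂ν2)) := by
  have hL : (0:ℝ) < L1 + L2 := by linarith
  haveI : IsFiniteMeasure ν1 := ⟨by rw [hν1]; exact ENNReal.ofReal_lt_top⟩
  haveI : IsFiniteMeasure ν2 := ⟨by rw [hν2]; exact ENNReal.ofReal_lt_top⟩
  have h1r : (ν1 Set.univ).toReal = L1 := by rw [hν1, ENNReal.toReal_ofReal hL1.le]
  have h2r : (ν2 Set.univ).toReal = L2 := by rw [hν2, ENNReal.toReal_ofReal hL2.le]
  have e1 : MeasurableEmbedding (Sum.inl : X1 → X1 ⊕ X2) := inl_embedding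
  have e2 : MeasurableEmbedding (Sum.inr : X2 → X1 ⊕ X2) := inr_embedding
  set μ := ν1.map Sum.inl + ν2.map Sum.inr with hμ
  set If := ∫ p, f p ∂ν1 with hIf
  set Ig := ∫ q, g q ∂ν2 with hIg
  set I1 := ∫ p, (∫ q, d1 p q ∂ν1) ∂ν1 with hI1
  set I2 := ∫ p, (∫ q, d2 p q ∂ν2) ∂ν2 with hI2
  have hinner1 : ∀ x, (∫ q, D (Sum.inl x) q ∂μ)
      = (∫ q, d1 x q ∂ν1) + (L2 * f x + Ig) := by
    intro x
    have hi1 : Integrable (D (Sum.inl x)) (ν1.map Sum.inl) := by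
      rw [e1.integrable_map_iff]
      exact (hd1 x).congr (by filter_upwards with q; simp [Function.comp, hD11])
    have hi2 : Integrable (D (Sum.inl x)) (ν2.map Sum.inr) := by
      rw [e2.integrable_map_iff]
      exact ((integrable_const (f x)).add hg).congr
        (by filter_upwards with q; simp [Function.comp, hD12])
    rw [hμ, integral_add_measure hi1 hi2, e1.integral_map, e2.integral_map]
    simp only [hD11, hD12]
    rw [integral_add (integrable_const (f x)) hg, integral_const, smul_eq_mul, measureReal_def, h2r, hIg]
  have hinner2 : ∀ y, (∫ q, D (Sum.inr y) q ∂μ)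
      = (If + L1 * g y) + (∫ q, d2 y q ∂ν2) := by
    intro y
    have hi1 : Integrable (D (Sum.inr y)) (ν1.map Sum.inl) := by
      rw [e1.integrable_map_iff]
      exact (hf.add (integrable_const (g y))).congr
        (by filter_upwards with p; simp [Function.comp, hD21])
    have hi2 : Integrable (D (Sum.inr y)) (ν2.map Sum.inr) := by
      rw [e2.integrable_map_iff]
      exact (hd2 y).congr (by filter_upwards with q; simp [Function.comp, hD22])
    rw [hμ, integral_add_measure hi1 hi2, e1.integral_map, e2.integral_map]
    simp only [hD21, hD22]
    rw [integral_add hf (integrable_const (g y)), integral_const, smul_eq_mul, measureReal_def, h1r, hIf]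
  have hb1 : Integrable (fun x => L2 * f x + Ig) ν1 := (hf.const_mul L2).add (integrable_const Ig)
  have hb2 : Integrable (fun y => If + L1 * g y) ν2 := (integrable_const If).add (hg.const_mul L1)
  have hF1 : Integrable (fun p => ∫ q, D p q ∂μ) (ν1.map Sum.inl) := by
    rw [e1.integrable_map_iff]
    exact (hd1'.add hb1).congr
      (by filter_upwards with x; simp only [Function.comp, Pi.add_apply]; rw [hinner1 x])
  have hF2 : Integrable (fun p => ∫ q, D p q ∂μ) (ν2.map Sum.inr) := by
    rw [e2.integrable_map_iff]
    exact (hb2.add hd2').congr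
      (by filter_upwards with y; simp only [Function.comp, Pi.add_apply]; rw [hinner2 y])
  have houter : (∫ p, (∫ q, D p q ∂μ) ∂μ)
      = (I1 + (L2 * If + L1 * Ig)) + ((L2 * If + L1 * Ig) + I2) := by
    rw [hμ, integral_add_measure hF1 hF2, e1.integral_map, e2.integral_map]
    have h1 : (∫ x, (∫ q, D (Sum.inl x) q ∂μ) ∂ν1) = I1 + (L2 * If + L1 * Ig) := by
      rw [integral_congr_ae (by filter_upwards with x; rw [hinner1 x]),
        integral_add hd1' hb1,
        integral_add (hf.const_mul L2) (integrable_const Ig),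
        integral_const_mul, integral_const, smul_eq_mul, measureReal_def, h1r, hI1, hIf]
    have h2 : (∫ y, (∫ q, D (Sum.inr y) q ∂μ) ∂ν2) = (L2 * If + L1 * Ig) + I2 := by
      rw [integral_congr_ae (by filter_upwards with y; rw [hinner2 y]),
        integral_add hb2 hd2',
        integral_add (integrable_const If) (hg.const_mul L1),
        integral_const_mul, integral_const, smul_eq_mul, measureReal_def, h2r, hI2, hIg]
    rw [h1, h2]
  rw [houter]
  field_simp
  ring
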